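/- For every ρ > 0, m ∈ ℝⁿ, and trace-free symmetric n×n matrix U, the operator norm of U satisfies ‖U‖_op ≤ (n−1) · λ_max((m⊗m)/ρ − U). -/

import Mathlib

open Matrix

lemma symm_herm {n : ℕ} {U : Matrix (Fin n) (Fin n) ℝ} (hU : U.IsSymm) : U.IsHermitian := by
  rw [IsHermitian, conjTranspose_eq_transpose_of_trivial]; exact hU

lemma aux1 {n : ℕ} {U : Matrix (Fin n) (Fin n) ℝ} (hU : U.IsHermitian) (v : Fin n → ℝ) :
    v ⬝ᵥ U *ᵥ v = ∑ i, hU.eigenvalues i * ((star (hU.eigenvectorUnitary : Matrix (Fin n) (Fin n) ℝ) *ᵥ v) i)^2 := by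
  have h1 : star (hU.eigenvectorUnitary : Matrix (Fin n) (Fin n) ℝ) = (hU.eigenvectorUnitary : Matrix (Fin n) (Fin n) ℝ)ᵀ :=
    conjTranspose_eq_transpose_of_trivial _
  conv_lhs => rw [hU.spectral_theorem, Unitary.conjStarAlgAut_apply]
  rw [← mulVec_mulVec, ← mulVec_mulVec, dotProduct_mulVec, h1, ← mulVec_transpose]
  simp [dotProduct, mulVec_diagonal, sq]
  exact Finset.sum_congr rfl fun i _ => by ring

lemma aux2 {n : ℕ} {U : Matrix (Fin n) (Fin n) ℝ} (hU : U.IsHermitian) (v : Fin n → ℝ) :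
    ∑ i, ((star (hU.eigenvectorUnitary : Matrix (Fin n) (Fin n) ℝ) *ᵥ v) i)^2 = ∑ i, v i ^ 2 := by
  have h2 : (hU.eigenvectorUnitary : Matrix (Fin n) (Fin n) ℝ) * star (hU.eigenvectorUnitary : Matrix (Fin n) (Fin n) ℝ) = 1 :=
    (Matrix.mem_unitaryGroup_iff).mp hU.eigenvectorUnitary.2
  have h1 : star (hU.eigenvectorUnitary : Matrix (Fin n) (Fin n) ℝ) = (hU.eigenvectorUnitary : Matrix (Fin n) (Fin n) ℝ)ᵀ :=
    conjTranspose_eq_transpose_of_trivial _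
  have key : ∀ w : Fin n → ℝ, ∑ i, w i ^ 2 = w ⬝ᵥ w := by
    intro w; simp [dotProduct, sq]
  rw [key, key, h1]
  have e : ((hU.eigenvectorUnitary : Matrix (Fin n) (Fin n) ℝ)ᵀ *ᵥ v) ⬝ᵥ ((hU.eigenvectorUnitary : Matrix (Fin n) (Fin n) ℝ)ᵀ *ᵥ v)
      = v ⬝ᵥ ((hU.eigenvectorUnitary : Matrix (Fin n) (Fin n) ℝ) * (hU.eigenvectorUnitary : Matrix (Fin n) (Fin n) ℝ)ᵀ) *ᵥ v := by
    symm; rw [← mulVec_mulVec, dotProduct_mulVec, mulVec_transpose]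
  rw [e, ← h1, h2, one_mulVec]

lemma trace_eig {n : ℕ} {U : Matrix (Fin n) (Fin n) ℝ} (hU : U.IsHermitian) :
    ∑ i, hU.eigenvalues i = U.trace := by
  have h2 : star (hU.eigenvectorUnitary : Matrix (Fin n) (Fin n) ℝ) * (hU.eigenvectorUnitary : Matrix (Fin n) (Fin n) ℝ) = 1 :=
    (Matrix.mem_unitaryGroup_iff').mp hU.eigenvectorUnitary.2
  conv_rhs => rw [hU.spectral_theorem, Unitary.conjStarAlgAut_apply]
  rw [trace_mul_cycle, h2, one_mul, trace_diagonal]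
  simp

lemma col_unit {n : ℕ} {U : Matrix (Fin n) (Fin n) ℝ} (hU : U.IsHermitian) (i : Fin n) :
    star (hU.eigenvectorUnitary : Matrix (Fin n) (Fin n) ℝ) *ᵥ
      ((hU.eigenvectorUnitary : Matrix (Fin n) (Fin n) ℝ) *ᵥ Pi.single i 1) = Pi.single i 1 := by
  have h2 : star (hU.eigenvectorUnitary : Matrix (Fin n) (Fin n) ℝ) * (hU.eigenvectorUnitary : Matrix (Fin n) (Fin n) ℝ) = 1 :=
    (Matrix.mem_unitaryGroup_iff').mp hU.eigenvectorUnitary.2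
  rw [mulVec_mulVec, h2, one_mulVec]
noncomputable def lambdaMax {n : ℕ} (S : Matrix (Fin n) (Fin n) ℝ) : ℝ :=
  sSup {r : ℝ | ∃ v : Fin n → ℝ, (∑ i, v i ^ 2) = 1 ∧ r = v ⬝ᵥ S.mulVec v}

noncomputable def opNorm {n : ℕ} (S : Matrix (Fin n) (Fin n) ℝ) : ℝ :=
  sSup {r : ℝ | ∃ v : Fin n → ℝ, (∑ i, v i ^ 2) = 1 ∧ r = |v ⬝ᵥ S.mulVec v|}

theorem stmt_3 {n : ℕ} (hn : 0 < n) (ρ : ℝ) (hρ : 0 < ρ) (m : Fin n → ℝ)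
    (U : Matrix (Fin n) (Fin n) ℝ) (hU : U.IsSymm) (hU0 : U.trace = 0) :
    opNorm U ≤ ((n : ℝ) - 1) * lambdaMax (ρ⁻¹ • vecMulVec m m - U) := by
  have hUH : U.IsHermitian := symm_herm hU
  set V := (hUH.eigenvectorUnitary : Matrix (Fin n) (Fin n) ℝ) with hVdef
  set μ := hUH.eigenvalues with hμdef
  set A := ρ⁻¹ • vecMulVec m m - U with hA
  set L := lambdaMax A with hL
  -- quadratic form of A
  have hAv : ∀ v : Fin n → ℝ, v ⬝ᵥ A *ᵥ v = ρ⁻¹ * (m ⬝ᵥ v)^2 - v ⬝ᵥ U *ᵥ v := by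
    intro v
    rw [hA, sub_mulVec, dotProduct_sub, smul_mulVec, dotProduct_smul, smul_eq_mul]
    congr 1
    simp [vecMulVec, mulVec, dotProduct, Finset.mul_sum, Finset.sum_mul, sq, mul_assoc]
    exact Finset.sum_congr rfl fun i _ => Finset.sum_congr rfl fun j _ => by ring
  -- BddAbove of the Rayleigh set of A
  have hb : BddAbove {r : ℝ | ∃ v : Fin n → ℝ, (∑ i, v i ^ 2) = 1 ∧ r = v ⬝ᵥ A.mulVec v} := by
    refine ⟨∑ i, ∑ j, |A i j|, ?_⟩
    rintro r ⟨v, hv, rfl⟩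
    have hv1 : ∀ i, |v i| ≤ 1 := by
      intro i
      rw [← sq_le_one_iff_abs_le_one]
      calc v i ^ 2 ≤ ∑ j, v j ^ 2 :=
            Finset.single_le_sum (f := fun j => v j ^ 2) (fun j _ => sq_nonneg _) (Finset.mem_univ i)
        _ = 1 := hv
    calc v ⬝ᵥ A *ᵥ v = ∑ i, ∑ j, v i * (A i j * v j) := by
          simp [dotProduct, mulVec, Finset.mul_sum]
      _ ≤ ∑ i, ∑ j, |A i j| := by
          refine Finset.sum_le_sum fun i _ => Finset.sum_le_sum fun j _ => ?_
          calc v i * (A i j * v j) ≤ |v i * (A i j * v j)| := le_abs_self _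
            _ = |v i| * |A i j| * |v j| := by rw [abs_mul, abs_mul]; ring
            _ ≤ 1 * |A i j| * 1 := by
                have h1 := hv1 i; have h2 := hv1 j
                gcongr
            _ = |A i j| := by ring
  have hle : ∀ v : Fin n → ℝ, (∑ i, v i ^ 2) = 1 → v ⬝ᵥ A *ᵥ v ≤ L :=
    fun v hv => le_csSup hb ⟨v, hv, rfl⟩
  -- eigenvector columns
  have hcol_unit : ∀ i : Fin n, ∑ j, (V *ᵥ Pi.single i 1) j ^ 2 = 1 := by
    intro i
    have := aux2 hUH (V *ᵥ Pi.single i 1)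
    rw [← hVdef] at this
    rw [← this, col_unit hUH i]
    simp [Pi.single_apply, sq]
  have hcol_quad : ∀ i : Fin n, (V *ᵥ Pi.single i 1) ⬝ᵥ U *ᵥ (V *ᵥ Pi.single i 1) = μ i := by
    intro i
    have := aux1 hUH (V *ᵥ Pi.single i 1)
    rw [← hVdef, ← hμdef, col_unit hUH i] at this
    rw [this]
    simp [Pi.single_apply, sq]
  -- lower bound on eigenvalues
  have hlb : ∀ i : Fin n, -μ i ≤ L := by
    intro i
    have h1 := hle _ (hcol_unit i)
    rw [hAv, hcol_quad i] at h1
    nlinarith [sq_nonneg (m ⬝ᵥ (V *ᵥ Pi.single i 1)), inv_pos.mpr hρ]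
  -- sum of eigenvalues is zero
  have hsum : ∑ i, μ i = 0 := by rw [hμdef, trace_eig hUH, hU0]
  -- L nonneg
  have hL0 : 0 ≤ L := by
    have hex : ∃ i : Fin n, μ i ≤ 0 := by
      by_contra h
      push_neg at h
      have : 0 < ∑ i, μ i := Finset.sum_pos (fun i _ => h i) (Finset.univ_nonempty_iff.mpr ⟨⟨0, hn⟩⟩)
      linarith
    obtain ⟨i, hi⟩ := hex
    have := hlb i
    linarith
  -- upper bound on eigenvalues
  have hub : ∀ i : Fin n, μ i ≤ ((n : ℝ) - 1) * L := by
    intro i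
    have h1 : μ i = -∑ j ∈ Finset.univ.erase i, μ j := by
      have := Finset.add_sum_erase Finset.univ μ (Finset.mem_univ i)
      rw [hsum] at this
      linarith
    rw [h1, neg_le]
    have h2 : -(((n:ℝ) - 1) * L) ≤ ∑ j ∈ Finset.univ.erase i, μ j := by
      have h3 : ∑ j ∈ Finset.univ.erase i, (-L) ≤ ∑ j ∈ Finset.univ.erase i, μ j :=
        Finset.sum_le_sum fun j _ => by linarith [hlb j]
      have h4 : (Finset.univ.erase i).card = n - 1 := by
        rw [Finset.card_erase_of_mem (Finset.mem_univ i), Finset.card_univ, Fintype.card_fin]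
      rw [Finset.sum_const, h4] at h3
      have h5 : ((n - 1 : ℕ) : ℝ) = (n : ℝ) - 1 := by
        rw [Nat.cast_sub hn]; simp
      rw [nsmul_eq_mul, h5] at h3
      linarith
    linarith
  -- abs bound on eigenvalues
  have habs : ∀ i : Fin n, |μ i| ≤ ((n : ℝ) - 1) * L := by
    intro i
    rw [abs_le]
    refine ⟨?_, hub i⟩
    rcases Nat.lt_or_ge n 2 with h2 | h2
    · have he : n = 1 := by omega
      subst he
      have h0 : μ i = 0 := by
        have h6 : ∑ j, μ j = μ i := by
          rw [Fin.sum_univ_one]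
          congr 1
          exact Subsingleton.elim _ _
        linarith
      rw [h0]
      norm_num
    · have hn1 : (1:ℝ) ≤ (n:ℝ) - 1 := by
        have : (2:ℝ) ≤ (n:ℝ) := by exact_mod_cast h2
        linarith
      have := hlb i
      nlinarith
  -- main bound
  rw [show opNorm U = sSup {r : ℝ | ∃ v : Fin n → ℝ, (∑ i, v i ^ 2) = 1 ∧ r = |v ⬝ᵥ U.mulVec v|} from rfl]
  apply csSup_le
  · refine ⟨_, Pi.single ⟨0, hn⟩ 1, ?_, rfl⟩
    simp [Pi.single_apply, sq]
  · rintro r ⟨v, hv, rfl⟩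
    rw [aux1 hUH v]
    set w := star (hUH.eigenvectorUnitary : Matrix (Fin n) (Fin n) ℝ) *ᵥ v with hw
    have hwsum : ∑ i, (w i)^2 = 1 := by rw [hw, aux2 hUH v, hv]
    calc |∑ i, μ i * (w i)^2| ≤ ∑ i, |μ i * (w i)^2| := Finset.abs_sum_le_sum_abs _ _
      _ = ∑ i, |μ i| * (w i)^2 := by
          refine Finset.sum_congr rfl fun i _ => ?_
          rw [abs_mul, abs_pow, sq_abs]
      _ ≤ ∑ i, (((n:ℝ) - 1) * L) * (w i)^2 :=
          Finset.sum_le_sum fun i _ => mul_le_mul_of_nonneg_right (habs i) (sq_nonneg _)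
      _ = ((n:ℝ) - 1) * L := by rw [← Finset.mul_sum, hwsum, mul_one]
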